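/- The submax Tucker rank, defined by r(X) = the second-largest value among rank(X_(1)),…,rank(X_(N)) (counted with multiplicity, and equal to rank(X_(1)) when N=1), is a QZC rank function. -/

import Mathlib

open scoped BigOperators

/-- An order-`N` real tensor with mode sizes `I n`. -/
abbrev Tensor (N : ℕ) (I : Fin N → ℕ) : Type :=
  ((n : Fin N) → Fin (I n)) → ℝ

/-- A rank-one tensor is an outer product of nonzero vectors. -/
def IsRankOne {N : ℕ} {I : Fin N → ℕ} (X : Tensor N I) : Prop :=
  ∃ a : (n : Fin N) → Fin (I n) → ℝ, (∀ n, a n ≠ 0) ∧ ∀ i, X i = ∏ n, a n (i n)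

/-- The order-`N` identity tensor `I_{M,N}`: ones on the diagonal, zeros elsewhere. -/
def idTensor (M N : ℕ) : Tensor N (fun _ => M) :=
  fun i => if ∀ n m : Fin N, i n = i m then 1 else 0

/-- The matrix associated to a tensor of shape `I₁ × I₂ × 1 × ⋯ × 1`. -/
def assocMatrix {N : ℕ} {I : Fin N → ℕ} (h2 : 2 ≤ N)
    (h1 : ∀ n : Fin N, 2 ≤ n.val → I n = 1) (X : Tensor N I) :
    Matrix (Fin (I ⟨0, by omega⟩)) (Fin (I ⟨1, by omega⟩)) ℝ :=
  Matrix.of fun p q =>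
    X (fun m =>
      if e0 : m = ⟨0, by omega⟩ then Fin.cast (congrArg I e0.symm) p
      else if e1 : m = ⟨1, by omega⟩ then Fin.cast (congrArg I e1.symm) q
      else Fin.cast (h1 m (by
        have v0 : m.val ≠ 0 := fun hh => e0 (Fin.ext hh)
        have v1 : m.val ≠ 1 := fun hh => e1 (Fin.ext hh)
        omega)).symm 0)

/-- Permutation of the modes of a tensor. -/
def permute {N : ℕ} (I : Fin N → ℕ) (π : Equiv.Perm (Fin N)) (X : Tensor N I) :
    Tensor N (fun m => I (π m)) :=
  fun i => X (fun m => Fin.cast (congrArg I (π.apply_symm_apply m)) (i (π.symm m)))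

/-- `Y` is a subtensor of `X` : it is obtained by selecting, in each mode, an
increasing subset of the indices. -/
def IsSubtensor {N : ℕ} {J I : Fin N → ℕ} (Y : Tensor N J) (X : Tensor N I) : Prop :=
  ∃ f : (n : Fin N) → Fin (J n) → Fin (I n),
    (∀ n, StrictMono (f n)) ∧ ∀ i, Y i = X (fun n => f n (i n))

/-- The mode-`n` unfolding of a tensor, as a matrix whose columns are the
mode-`n` fibers. -/
def modeUnfold {N : ℕ} {I : Fin N → ℕ} (X : Tensor N I) (n : Fin N) :
    Matrix (Fin (I n)) ((m : {m : Fin N // m ≠ n}) → Fin (I m.1)) ℝ :=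
  Matrix.of fun p j =>
    X (fun m => if h : m = n then Fin.cast (congrArg I h.symm) p else j ⟨m, h⟩)

/-- The mode-`n` matrix product `X ×ₙ A`. -/
def modeMul {N : ℕ} {I : Fin N → ℕ} (X : Tensor N I) (n : Fin N) {J : ℕ}
    (A : Matrix (Fin J) (Fin (I n)) ℝ) : Tensor N (Function.update I n J) :=
  fun i => ∑ t : Fin (I n),
    A (Fin.cast (by simp) (i n)) t *
      X (fun m =>
        if h : m = n then Fin.cast (congrArg I h.symm) t
        else Fin.cast (by rw [Function.update_of_ne h]) (i m))

/-- Appending a trailing mode of dimension 1 to a tensor. -/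
def snocOne {N : ℕ} {I : Fin N → ℕ} (X : Tensor N I) :
    Tensor (N + 1) (Fin.snoc I 1) :=
  fun i => X (fun m => Fin.cast (by simp) (i m.castSucc))

/-- The matrix associated to a tensor all of whose modes other than `n₁, n₂`
have dimension 1 (a "submatrix" shape). -/
def twoModeMatrix {N : ℕ} {J : Fin N → ℕ} (Z : Tensor N J) (n₁ n₂ : Fin N)
    (h1 : ∀ m, m ≠ n₁ → m ≠ n₂ → J m = 1) : Matrix (Fin (J n₁)) (Fin (J n₂)) ℝ :=
  Matrix.of fun p q =>
    Z (fun m =>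
      if h : m = n₁ then Fin.cast (congrArg J h.symm) p
      else if h' : m = n₂ then Fin.cast (congrArg J h'.symm) q
      else Fin.cast (h1 m h h').symm 0)

/-- A rank function assigns a natural number to every real tensor. -/
def RankFun : Type :=
  ∀ (N : ℕ) (I : Fin N → ℕ), Tensor N I → ℕ

/-- The axioms (QZC1)–(QZC6) of Qi, Zhang and Chen for a tensor rank function. -/
structure IsQZCRankFn (r : RankFun) : Prop where
  zero_iff : ∀ (N : ℕ), 0 < N → ∀ (I : Fin N → ℕ) (X : Tensor N I),
    r N I X = 0 ↔ X = 0
  one_iff : ∀ (N : ℕ), 0 < N → ∀ (I : Fin N → ℕ) (X : Tensor N I),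
    r N I X = 1 ↔ IsRankOne X
  id_eq : ∀ (M N : ℕ), 2 ≤ N → r N (fun _ => M) (idTensor M N) = M
  matrix_eq : ∀ (N : ℕ) (h2 : 2 ≤ N) (I : Fin N → ℕ)
    (h1 : ∀ n : Fin N, 2 ≤ n.val → I n = 1) (X : Tensor N I),
    r N I X = (assocMatrix h2 h1 X).rank
  smul_eq : ∀ (N : ℕ), 0 < N → ∀ (I : Fin N → ℕ) (α : ℝ), α ≠ 0 →
    ∀ (X : Tensor N I), r N I (α • X) = r N I X
  perm_eq : ∀ (N : ℕ), 0 < N → ∀ (I : Fin N → ℕ) (π : Equiv.Perm (Fin N))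
    (X : Tensor N I), r N (fun m => I (π m)) (permute I π X) = r N I X
  subtensor_le : ∀ (N : ℕ), 0 < N → ∀ (I J : Fin N → ℕ) (X : Tensor N I)
    (Y : Tensor N J), IsSubtensor Y X → r N J Y ≤ r N I X

/-- The max Tucker rank: the largest rank of a mode-`n` unfolding. -/
noncomputable def maxTuckerRank : RankFun := fun N _I X =>
  Finset.univ.sup fun n : Fin N => (modeUnfold X n).rank

/-- The submax Tucker rank: the second-largest (with multiplicity) rank of a
mode unfolding, and the unfolding rank itself when `N = 1`. -/
noncomputable def submaxRank : RankFun := fun N _I X =>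
  let s : Multiset ℕ := (Finset.univ : Finset (Fin N)).val.map fun n => (modeUnfold X n).rank
  if N ≤ 1 then s.sup else (s.erase s.sup).sup

/- ======================= Auxiliary lemmas ======================= -/

section Aux

open Matrix Module

set_option linter.unusedSectionVars false

variable {m n l o : Type*} [Fintype m] [Fintype n] [Fintype l] [Fintype o]
  [DecidableEq n] [DecidableEq o] [DecidableEq m] [DecidableEq l]

theorem myrank_eq_zero_iff (A : Matrix m n ℝ) : A.rank = 0 ↔ A = 0 := by
  constructor
  · intro h
    rw [Matrix.rank, Submodule.finrank_eq_zero, LinearMap.range_eq_bot] at h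
    ext p q
    have h2 : A.mulVecLin (Pi.single q 1) = (0 : (n → ℝ) →ₗ[ℝ] m → ℝ) (Pi.single q 1) := by
      rw [h]
    have := congrFun h2 p
    simpa [Matrix.mulVecLin_apply, Matrix.mulVec_single] using this
  · rintro rfl; simp

theorem myrank_row_select_le (A : Matrix m n ℝ) (r : l → m) :
    (A.submatrix r id).rank ≤ A.rank := by
  rw [Matrix.rank, Matrix.rank]
  have hle : LinearMap.range (A.submatrix r id).mulVecLin ≤
      Submodule.map (LinearMap.funLeft ℝ ℝ r) (LinearMap.range A.mulVecLin) := by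
    rintro x ⟨y, rfl⟩
    exact ⟨A.mulVecLin y, ⟨y, rfl⟩, rfl⟩
  exact le_trans (Submodule.finrank_mono hle) (Submodule.finrank_map_le _ _)

theorem myrank_submatrix_le (A : Matrix m n ℝ) (r : l → m) (c : o → n) :
    (A.submatrix r c).rank ≤ A.rank := by
  have h1 : (A.submatrix id c).rank ≤ A.rank := by
    have := myrank_row_select_le Aᵀ c
    rw [← Matrix.rank_transpose (A.submatrix id c), Matrix.transpose_submatrix]
    rw [← Matrix.rank_transpose A]
    exact this
  calc (A.submatrix r c).rank = ((A.submatrix id c).submatrix r id).rank := rfl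
    _ ≤ (A.submatrix id c).rank := myrank_row_select_le _ _
    _ ≤ A.rank := h1

theorem myrank_submatrix_eq (A : Matrix m n ℝ) (e₁ : l ≃ m) (e₂ : o ≃ n) :
    (A.submatrix e₁ e₂).rank = A.rank := by
  refine le_antisymm (myrank_submatrix_le A e₁ e₂) ?_
  have : ((A.submatrix e₁ e₂).submatrix e₁.symm e₂.symm).rank ≤ (A.submatrix e₁ e₂).rank :=
    myrank_submatrix_le _ _ _
  simpa [Matrix.submatrix_submatrix, Function.comp] using this

theorem myrank_le_one (u : m → ℝ) (v : n → ℝ) (A : Matrix m n ℝ)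
    (h : ∀ p q, A p q = u p * v q) : A.rank ≤ 1 := by
  by_cases hu : u = 0
  · have : A = 0 := by ext p q; simp [h, hu]
    simp [this]
  rw [Matrix.rank]
  have hle : LinearMap.range A.mulVecLin ≤ Submodule.span ℝ {u} := by
    rintro x ⟨y, rfl⟩
    have : A.mulVecLin y = (∑ q, v q * y q) • u := by
      funext p
      simp [Matrix.mulVecLin_apply, Matrix.mulVec, dotProduct, h, Finset.sum_mul,
        Finset.mul_sum]
      ring_nf
    rw [this]
    exact Submodule.smul_mem _ _ (Submodule.mem_span_singleton_self u)
  exact le_trans (Submodule.finrank_mono hle) (le_of_eq (finrank_span_singleton hu))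

theorem myrank_one_of (u : m → ℝ) (v : n → ℝ) (A : Matrix m n ℝ)
    (h : ∀ p q, A p q = u p * v q) (hu : u ≠ 0) (hv : v ≠ 0) : A.rank = 1 := by
  refine le_antisymm (myrank_le_one u v A h) ?_
  rcases Nat.eq_zero_or_pos A.rank with h0 | h1
  · exfalso
    rw [myrank_eq_zero_iff] at h0
    obtain ⟨p, hp⟩ := Function.ne_iff.mp hu
    obtain ⟨q, hq⟩ := Function.ne_iff.mp hv
    have := congrFun (congrFun h0 p) q
    rw [h] at this
    simp only [Matrix.zero_apply] at this
    rcases mul_eq_zero.mp this with h' | h'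
    exacts [hp h', hq h']
  · exact h1

theorem myrank_minor (A : Matrix m n ℝ) (h : A.rank ≤ 1) (p p' : m) (q q' : n) :
    A p q * A p' q' = A p q' * A p' q := by
  by_contra hne
  set B : Matrix (Fin 2) (Fin 2) ℝ := A.submatrix ![p, p'] ![q, q'] with hB
  have hdet : B.det ≠ 0 := by
    rw [Matrix.det_fin_two]
    simp [hB, Matrix.submatrix_apply]
    intro hc
    exact hne (by linarith [sub_eq_zero.mp hc])
  have h2 : B.rank = 2 := by
    rw [Matrix.rank_of_isUnit B ((Matrix.isUnit_iff_isUnit_det B).mpr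
      (isUnit_iff_ne_zero.mpr hdet))]
    simp
  have hle : B.rank ≤ 1 := le_trans (myrank_submatrix_le A _ _) h
  omega

theorem myrank_smul (A : Matrix m n ℝ) {α : ℝ} (hα : α ≠ 0) : (α • A).rank = A.rank := by
  have hr : LinearMap.range (α • A).mulVecLin = LinearMap.range A.mulVecLin := by
    apply le_antisymm
    · rintro x ⟨y, rfl⟩
      refine ⟨α • y, ?_⟩
      simp [Matrix.mulVecLin_apply, Matrix.mulVec_smul, Matrix.smul_mulVec]
    · rintro x ⟨y, rfl⟩
      refine ⟨α⁻¹ • y, ?_⟩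
      simp [Matrix.mulVecLin_apply, Matrix.mulVec_smul, Matrix.smul_mulVec]
      rw [smul_smul, inv_mul_cancel₀ hα, one_smul]
  rw [Matrix.rank, Matrix.rank, hr]

/- ---------------- multiset submax lemmas ---------------- -/

theorem multiset_sup_mem {s : Multiset ℕ} (h : s ≠ 0) : s.sup ∈ s := by
  induction s using Multiset.induction with
  | empty => exact absurd rfl h
  | cons a t ih =>
    rw [Multiset.sup_cons]
    rcases eq_or_ne t 0 with rfl | ht
    · simp
    · rcases le_total t.sup a with hle | hle
      · rw [sup_eq_left.mpr hle]; exact Multiset.mem_cons_self _ _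
      · rw [sup_eq_right.mpr hle]; exact Multiset.mem_cons_of_mem (ih ht)

/-- The submax value of a function on `Fin N`. -/
noncomputable def smv {N : ℕ} (r : Fin N → ℕ) : ℕ :=
  ((Finset.univ.val.map r).erase (Finset.univ.val.map r).sup).sup

theorem erase_map_eq {N : ℕ} (r : Fin N → ℕ) (n : Fin N) :
    (Finset.univ.val.map r).erase (r n) = ((Finset.univ.erase n).val.map r) := by
  have h1 : (Finset.univ : Finset (Fin N)).val = n ::ₘ (Finset.univ.erase n).val := by
    rw [Finset.erase_val, (Multiset.cons_erase (Finset.mem_univ n : n ∈ Finset.univ.val))]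
  rw [h1, Multiset.map_cons, Multiset.erase_cons_head]

theorem smv_le {N : ℕ} (r : Fin N → ℕ) {k : ℕ}
    (h : ∀ n m : Fin N, n ≠ m → r n ≤ k ∨ r m ≤ k) : smv r ≤ k := by
  unfold smv
  set s := (Finset.univ : Finset (Fin N)).val.map r with hs
  rcases eq_or_ne (s.erase s.sup) 0 with h0 | h0
  · rw [h0]; simp
  have hsne : s ≠ 0 := fun hc => h0 (by rw [hc]; rfl)
  obtain ⟨n, _, hn⟩ := Multiset.mem_map.mp (multiset_sup_mem hsne)
  rw [Multiset.sup_le]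
  intro b hb
  rw [← hn, erase_map_eq] at hb
  obtain ⟨mm, hm, rfl⟩ := Multiset.mem_map.mp hb
  have hmn : mm ≠ n := (Finset.mem_erase.mp (Finset.mem_val.mp hm)).1
  have hle : r mm ≤ r n := by
    rw [hn]; exact Multiset.le_sup (Multiset.mem_map_of_mem r (Finset.mem_val.mpr (Finset.mem_univ mm)))
  rcases h n mm (Ne.symm hmn) with h' | h' <;> omega

theorem le_smv {N : ℕ} (r : Fin N → ℕ) {n m : Fin N} (h : n ≠ m) {k : ℕ}
    (hk1 : k ≤ r n) (hk2 : k ≤ r m) : k ≤ smv r := by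
  unfold smv
  set s := (Finset.univ : Finset (Fin N)).val.map r with hs
  rcases eq_or_ne (r n) s.sup with he | he
  · rw [← he, erase_map_eq]
    have : r m ∈ (Finset.univ.erase n).val.map r :=
      Multiset.mem_map_of_mem r
        (Finset.mem_val.mpr (Finset.mem_erase.mpr ⟨Ne.symm h, Finset.mem_univ m⟩))
    exact le_trans hk2 (Multiset.le_sup this)
  · have : r n ∈ s.erase s.sup :=
      (Multiset.mem_erase_of_ne he).mpr (Multiset.mem_map_of_mem r (Finset.mem_univ n))
    exact le_trans hk1 (Multiset.le_sup this)

end Aux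
/- ---------------- tensor-level helpers ---------------- -/

section TensorAux
open Matrix

theorem unfold_apply {N : ℕ} {I : Fin N → ℕ} (X : Tensor N I) (n : Fin N)
    (i : (m : Fin N) → Fin (I m)) :
    modeUnfold X n (i n) (fun m => i m.1) = X i := by
  show X _ = X i
  congr 1
  funext m
  by_cases h : m = n
  · subst h; simp
  · simp [h]

theorem unfold_apply2 {N : ℕ} {I : Fin N → ℕ} (X : Tensor N I) (n : Fin N)
    (p : Fin (I n)) (j : (m : Fin N) → Fin (I m)) :
    modeUnfold X n p (fun m => j m.1) = X (Function.update j n p) := by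
  have h := unfold_apply X n (Function.update j n p)
  rw [← h]
  congr 1
  · exact (Function.update_self n p j).symm
  · funext m
    exact congrArg (fun z => z) (Function.update_of_ne m.2 p j).symm

theorem unfold_eq_zero_iff {N : ℕ} {I : Fin N → ℕ} (X : Tensor N I) (n : Fin N) :
    modeUnfold X n = 0 ↔ X = 0 := by
  constructor
  · intro h
    funext i
    have := congrFun (congrFun h (i n)) (fun m => i m.1)
    rw [unfold_apply] at this
    simpa using this
  · rintro rfl
    funext p j
    rfl

theorem unfold_rank_pos {N : ℕ} {I : Fin N → ℕ} {X : Tensor N I} (hX : X ≠ 0) (n : Fin N) :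
    1 ≤ (modeUnfold X n).rank := by
  rw [Nat.one_le_iff_ne_zero]
  intro h0
  exact hX ((unfold_eq_zero_iff X n).mp ((myrank_eq_zero_iff _).mp h0))

theorem swap_identity {N : ℕ} {I : Fin N → ℕ} (X : Tensor N I) (n : Fin N)
    (h : (modeUnfold X n).rank ≤ 1) (i j : (m : Fin N) → Fin (I m)) :
    X i * X j = X (Function.update i n (j n)) * X (Function.update j n (i n)) := by
  have key := myrank_minor (modeUnfold X n) h (i n) (j n)
    (fun m => i m.1) (fun m => j m.1)
  rw [unfold_apply, unfold_apply, unfold_apply2, unfold_apply2] at key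
  rw [mul_comm (X (Function.update i n (j n)))]
  exact key

theorem sep_lemma {N : ℕ} {I : Fin N → ℕ} (X : Tensor N I) (hX : X ≠ 0)
    (n₀ : Fin N) (h : ∀ n, n ≠ n₀ → (modeUnfold X n).rank ≤ 1) : IsRankOne X := by
  obtain ⟨istar, histar⟩ := Function.ne_iff.mp hX
  set c : ℝ := X istar with hc
  have hc0 : c ≠ 0 := by simpa using histar
  have main : ∀ S : Finset (Fin N), n₀ ∉ S → ∀ i,
      c ^ S.card * X i = (∏ n ∈ S, X (Function.update istar n (i n))) *
        X (fun m => if m ∈ S then istar m else i m) := by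
    intro S
    induction S using Finset.induction_on with
    | empty => intro _ i; simp
    | @insert a S ha ih =>
      intro hn₀ i
      have han₀ : a ≠ n₀ := fun hh => hn₀ (by rw [hh]; exact Finset.mem_insert_self _ _)
      have hSn₀ : n₀ ∉ S := fun hh => hn₀ (Finset.mem_insert_of_mem hh)
      have hih := ih hSn₀ i
      set g : (m : Fin N) → Fin (I m) := fun m => if m ∈ S then istar m else i m with hg
      have hswap := swap_identity X a (h a han₀) g istar
      have hga : g a = i a := by simp [hg, ha]
      have h1 : Function.update g a (istar a) =
          (fun m => if m ∈ insert a S then istar m else i m) := by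
        funext m
        by_cases hm : m = a
        · subst hm; simp
        · rw [Function.update_of_ne hm]
          simp [hg, Finset.mem_insert, hm]
      have h2 : Function.update istar a (g a) = Function.update istar a (i a) := by
        rw [hga]
      rw [h1, h2] at hswap
      rw [Finset.card_insert_of_notMem ha, Finset.prod_insert ha]
      calc c ^ (S.card + 1) * X i = c * (c ^ S.card * X i) := by ring
    _ = c * ((∏ n ∈ S, X (Function.update istar n (i n))) * X g) := by rw [hih]
    _ = (∏ n ∈ S, X (Function.update istar n (i n))) * (X g * c) := by ring
    _ = (∏ n ∈ S, X (Function.update istar n (i n))) *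
          (X (fun m => if m ∈ insert a S then istar m else i m) *
            X (Function.update istar a (i a))) := by
              rw [hc, hswap]
    _ = X (Function.update istar a (i a)) *
          (∏ n ∈ S, X (Function.update istar n (i n))) *
          X (fun m => if m ∈ insert a S then istar m else i m) := by ring
  have hfin : ∀ i, c ^ (Finset.univ.erase n₀).card * X i =
      (∏ n ∈ Finset.univ.erase n₀, X (Function.update istar n (i n))) *
        X (Function.update istar n₀ (i n₀)) := by
    intro i
    have := main (Finset.univ.erase n₀) (by simp) i
    rw [this]
    congr 2
    funext m
    by_cases hm : m = n₀
    · subst hm; simp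
    · simp [Finset.mem_erase, hm, Function.update_of_ne hm]
  refine ⟨fun n t => if n = n₀ then X (Function.update istar n t)
    else X (Function.update istar n t) / c, ?_, ?_⟩
  · intro n
    rw [Function.ne_iff]
    refine ⟨istar n, ?_⟩
    by_cases hn : n = n₀ <;> simp [hn, Function.update_eq_self, hc0, histar] <;> exact hc0
  · intro i
    have hsplit := Finset.mul_prod_erase Finset.univ
      (fun n => if n = n₀ then X (Function.update istar n (i n))
        else X (Function.update istar n (i n)) / c) (Finset.mem_univ n₀)
    rw [← hsplit]
    have hrest : ∀ n ∈ Finset.univ.erase n₀,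
        (if n = n₀ then X (Function.update istar n (i n))
          else X (Function.update istar n (i n)) / c) =
        X (Function.update istar n (i n)) / c := by
      intro n hn
      simp [(Finset.mem_erase.mp hn).1]
    rw [Finset.prod_congr rfl hrest, Finset.prod_div_distrib, Finset.prod_const]
    beta_reduce
    rw [if_pos rfl]
    have hcard : (Finset.univ.erase n₀).card = N - 1 := by
      rw [Finset.card_erase_of_mem (Finset.mem_univ n₀), Finset.card_univ, Fintype.card_fin]
    have hkey := hfin i
    rw [hcard] at hkey
    field_simp
    linarith [hkey, hfin i]

theorem unfold_rank_of_rankOne {N : ℕ} {I : Fin N → ℕ} {X : Tensor N I}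
    (h : IsRankOne X) (n : Fin N) : (modeUnfold X n).rank = 1 := by
  obtain ⟨a, ha, hX⟩ := h
  set v : ((m : {m : Fin N // m ≠ n}) → Fin (I m.1)) → ℝ :=
    fun j => ∏ m : {m : Fin N // m ≠ n}, a m.1 (j m) with hv
  refine myrank_one_of (a n) v _ ?_ (ha n) ?_
  · intro p j
    show X _ = _
    rw [hX]
    rw [← Finset.mul_prod_erase Finset.univ _ (Finset.mem_univ n)]
    congr 1
    · simp
    · rw [Finset.prod_subtype (p := fun m => m ≠ n) (Finset.univ.erase n)
        (fun x => by simp [Finset.mem_erase]) (fun m =>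
          a m (if h : m = n then Fin.cast (congrArg I h.symm) p else j ⟨m, h⟩))]
      refine Finset.prod_congr rfl fun m _ => ?_
      simp [m.2]
  · have hch : ∀ m : {m : Fin N // m ≠ n}, ∃ t, a m.1 t ≠ 0 :=
      fun m => Function.ne_iff.mp (ha m.1)
    choose j₀ hj₀ using hch
    rw [Function.ne_iff]
    refine ⟨j₀, ?_⟩
    rw [hv]
    exact Finset.prod_ne_zero_iff.mpr fun m _ => hj₀ m

end TensorAux
/- ---------------- bridge & easy axioms ---------------- -/

section Bridge
open Matrix

theorem fin_val_congr {α : Sort*} {f : α → ℕ} (j : (x : α) → Fin (f x)) {a b : α}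
    (h : a = b) : (j a : ℕ) = (j b : ℕ) := by subst h; rfl

theorem submaxRank_eq_smv {N : ℕ} {I : Fin N → ℕ} (X : Tensor N I) (h : ¬ N ≤ 1) :
    submaxRank N I X = smv (fun n => (modeUnfold X n).rank) := by
  simp only [submaxRank, smv]
  rw [if_neg h]

theorem submaxRank_eq_sup {N : ℕ} {I : Fin N → ℕ} (X : Tensor N I) (h : N ≤ 1) :
    submaxRank N I X = (Finset.univ.val.map (fun n => (modeUnfold X n).rank)).sup := by
  simp only [submaxRank]
  rw [if_pos h]

theorem submax_zero_iff {N : ℕ} (hN : 0 < N) (I : Fin N → ℕ) (X : Tensor N I) :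
    submaxRank N I X = 0 ↔ X = 0 := by
  constructor
  · intro h
    by_contra hX
    by_cases hN1 : N ≤ 1
    · rw [submaxRank_eq_sup X hN1] at h
      have hmem : (modeUnfold X ⟨0, hN⟩).rank ∈
          Finset.univ.val.map (fun n => (modeUnfold X n).rank) :=
        Multiset.mem_map_of_mem _ (Finset.mem_val.mpr (Finset.mem_univ _))
      have := Multiset.le_sup hmem
      have h1 := unfold_rank_pos hX ⟨0, hN⟩
      omega
    · rw [submaxRank_eq_smv X hN1] at h
      have hne : (⟨0, by omega⟩ : Fin N) ≠ ⟨1, by omega⟩ := by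
        intro hc
        have := congrArg Fin.val hc
        simp at this
      have h0 := unfold_rank_pos hX ⟨0, by omega⟩
      have h1 := unfold_rank_pos hX ⟨1, by omega⟩
      have hmin := le_smv (fun n => (modeUnfold X n).rank) hne h0 h1
      omega
  · rintro rfl
    have hr : ∀ n : Fin N, (modeUnfold (0 : Tensor N I) n).rank = 0 := fun n => by
      rw [(unfold_eq_zero_iff _ n).mpr rfl, Matrix.rank_zero]
    by_cases hN1 : N ≤ 1
    · rw [submaxRank_eq_sup _ hN1]
      apply Nat.eq_zero_of_le_zero
      rw [Multiset.sup_le]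
      intro b hb
      obtain ⟨n, _, rfl⟩ := Multiset.mem_map.mp hb
      simp [hr n]
    · rw [submaxRank_eq_smv _ hN1]
      apply Nat.eq_zero_of_le_zero
      apply smv_le
      intro n m _
      exact Or.inl (le_of_eq (hr n))

theorem submax_one_iff {N : ℕ} (hN : 0 < N) (I : Fin N → ℕ) (X : Tensor N I) :
    submaxRank N I X = 1 ↔ IsRankOne X := by
  constructor
  · intro h
    have hX : X ≠ 0 := by
      rintro rfl
      rw [(submax_zero_iff hN I 0).mpr rfl] at h
      omega
    by_cases hN1 : N ≤ 1
    · refine sep_lemma X hX ⟨0, hN⟩ ?_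
      intro n hn
      exfalso
      apply hn
      apply Fin.ext
      have := n.isLt
      omega
    · rw [submaxRank_eq_smv X hN1] at h
      have hex : ∃ n₀ : Fin N, ∀ n, n ≠ n₀ → (modeUnfold X n).rank ≤ 1 := by
        by_contra hc
        push_neg at hc
        obtain ⟨n, hn0, hn⟩ := hc ⟨0, by omega⟩
        obtain ⟨m, hmn, hm⟩ := hc n
        have hmin := le_smv (fun k => (modeUnfold X k).rank) hmn
          (k := 2) (by beta_reduce; omega) (by beta_reduce; omega)
        omega
      obtain ⟨n₀, hn₀⟩ := hex
      exact sep_lemma X hX n₀ hn₀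
  · intro h
    have hr := unfold_rank_of_rankOne h
    by_cases hN1 : N ≤ 1
    · rw [submaxRank_eq_sup X hN1]
      apply le_antisymm
      · rw [Multiset.sup_le]
        intro b hb
        obtain ⟨n, _, rfl⟩ := Multiset.mem_map.mp hb
        exact le_of_eq (hr n)
      · have hmem : (modeUnfold X ⟨0, hN⟩).rank ∈
            Finset.univ.val.map (fun n => (modeUnfold X n).rank) :=
          Multiset.mem_map_of_mem _ (Finset.mem_val.mpr (Finset.mem_univ _))
        have := Multiset.le_sup hmem
        rw [hr] at this
        exact this
    · rw [submaxRank_eq_smv X hN1]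
      apply le_antisymm
      · apply smv_le
        intro n m _
        exact Or.inl (le_of_eq (hr n))
      · have hne : (⟨0, by omega⟩ : Fin N) ≠ ⟨1, by omega⟩ := by
          intro hc
          have := congrArg Fin.val hc
          simp at this
        exact le_smv (fun n => (modeUnfold X n).rank) hne
          (le_of_eq (hr _).symm) (le_of_eq (hr _).symm)

theorem unfold_smul {N : ℕ} {I : Fin N → ℕ} (α : ℝ) (X : Tensor N I) (n : Fin N) :
    modeUnfold (α • X) n = α • modeUnfold X n := rfl

theorem submax_smul {N : ℕ} (hN : 0 < N) (I : Fin N → ℕ) (α : ℝ) (hα : α ≠ 0)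
    (X : Tensor N I) : submaxRank N I (α • X) = submaxRank N I X := by
  have hfun : (fun n => (modeUnfold (α • X) n).rank) = (fun n => (modeUnfold X n).rank) := by
    funext n
    rw [unfold_smul, myrank_smul _ hα]
  simp only [submaxRank]
  rw [hfun]

theorem unfold_subtensor_le {N : ℕ} {I J : Fin N → ℕ} {X : Tensor N I} {Y : Tensor N J}
    (h : IsSubtensor Y X) (n : Fin N) :
    (modeUnfold Y n).rank ≤ (modeUnfold X n).rank := by
  obtain ⟨f, -, hY⟩ := h
  have heq : modeUnfold Y n =
      (modeUnfold X n).submatrix (f n) (fun j m => f m.1 (j m)) := by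
    funext p j
    show Y _ = X _
    rw [hY]
    congr 1
    funext m
    by_cases hm : m = n
    · subst hm; simp
    · simp [hm]
  rw [heq]
  exact myrank_submatrix_le _ _ _

theorem submax_subtensor {N : ℕ} (hN : 0 < N) (I J : Fin N → ℕ) (X : Tensor N I)
    (Y : Tensor N J) (h : IsSubtensor Y X) : submaxRank N J Y ≤ submaxRank N I X := by
  have hle := unfold_subtensor_le h
  by_cases hN1 : N ≤ 1
  · rw [submaxRank_eq_sup Y hN1, submaxRank_eq_sup X hN1]
    rw [Multiset.sup_le]
    intro b hb
    obtain ⟨n, _, rfl⟩ := Multiset.mem_map.mp hb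
    exact le_trans (hle n)
      (Multiset.le_sup (Multiset.mem_map_of_mem _ (Finset.mem_univ n)))
  · rw [submaxRank_eq_smv Y hN1, submaxRank_eq_smv X hN1]
    apply smv_le
    intro n m hnm
    rcases le_total ((modeUnfold X n).rank) ((modeUnfold X m).rank) with hc | hc
    · exact Or.inl (le_trans (hle n)
        (le_smv (fun k => (modeUnfold X k).rank) hnm le_rfl hc))
    · exact Or.inr (le_trans (hle m)
        (le_smv (fun k => (modeUnfold X k).rank) hnm hc le_rfl))

end Bridge
/- ---------------- permutation axiom ---------------- -/

section Perm
open Matrix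

theorem unfold_permute_rank {N : ℕ} (I : Fin N → ℕ) (π : Equiv.Perm (Fin N))
    (X : Tensor N I) (n : Fin N) :
    (modeUnfold (permute I π X) n).rank = (modeUnfold X (π n)).rank := by
  apply le_antisymm
  · have heq : modeUnfold (permute I π X) n = (modeUnfold X (π n)).submatrix id
        (fun j => fun m' => Fin.cast (congrArg I (π.apply_symm_apply m'.1))
          (j ⟨π.symm m'.1, fun hh => m'.2 (by rw [← π.apply_symm_apply m'.1, hh])⟩)) := by
      funext p j
      show X _ = X _
      congr 1
      funext m'
      apply Fin.ext
      simp only [Fin.coe_cast]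
      by_cases hm : m' = π n
      · have hs : π.symm m' = n := by rw [hm]; exact π.symm_apply_apply n
        rw [dif_pos hs, dif_pos hm]
        simp
      · have hs : π.symm m' ≠ n := fun hh =>
          hm ((π.apply_symm_apply m').symm.trans (congrArg π hh))
        rw [dif_neg hs, dif_neg hm]
        simp
    rw [heq]
    exact myrank_submatrix_le _ _ _
  · have heq : modeUnfold X (π n) = (modeUnfold (permute I π X) n).submatrix id
        (fun k => fun m => k ⟨π m.1, fun hh => m.2 (π.injective hh)⟩) := by
      funext p k
      show X _ = X _
      congr 1
      funext m'
      apply Fin.ext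
      simp only [Fin.coe_cast]
      by_cases hm : m' = π n
      · have hs : π.symm m' = n := by rw [hm]; exact π.symm_apply_apply n
        rw [dif_pos hm, dif_pos hs]
        simp
      · have hs : π.symm m' ≠ n := fun hh =>
          hm ((π.apply_symm_apply m').symm.trans (congrArg π hh))
        rw [dif_neg hm, dif_neg hs]
        try simp only [Fin.coe_cast, id_eq]
        exact (fin_val_congr k (Subtype.ext (π.apply_symm_apply m'))).symm
    rw [heq]
    exact myrank_submatrix_le _ _ _

theorem submax_perm {N : ℕ} (hN : 0 < N) (I : Fin N → ℕ) (π : Equiv.Perm (Fin N))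
    (X : Tensor N I) :
    submaxRank N (fun m => I (π m)) (permute I π X) = submaxRank N I X := by
  have hfun : (fun n => (modeUnfold (permute I π X) n).rank) =
      (fun n => (modeUnfold X (π n)).rank) := by
    funext n
    exact unfold_permute_rank I π X n
  have hms : Finset.univ.val.map (fun n => (modeUnfold X (π n)).rank) =
      Finset.univ.val.map (fun n => (modeUnfold X n).rank) := by
    have h1 : (fun n => (modeUnfold X (π n)).rank) =
        (fun n => (modeUnfold X n).rank) ∘ π := rfl
    rw [h1, ← Multiset.map_map]
    congr 1
    simpa using congrArg Finset.val (Finset.univ_map_equiv_to_embedding π)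
  simp only [submaxRank]
  rw [hfun, hms]
/- ---------------- identity tensor axiom ---------------- -/

section IdEq
open Matrix

theorem unfold_id_rank (M N : ℕ) (h2 : 2 ≤ N) (n : Fin N) :
    (modeUnfold (idTensor M N) n).rank = M := by
  apply le_antisymm
  · exact le_trans (Matrix.rank_le_card_height _) (by simp)
  · -- pick a mode different from n
    have hm₁ : ∃ m₁ : Fin N, m₁ ≠ n := by
      rcases eq_or_ne n ⟨0, by omega⟩ with hn | hn
      · exact ⟨⟨1, by omega⟩, by rw [hn]; intro hc; have := congrArg Fin.val hc; simp at this⟩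
      · exact ⟨⟨0, by omega⟩, fun hc => hn hc.symm⟩
    obtain ⟨m₁, hm₁⟩ := hm₁
    set E := modeUnfold (idTensor M N) n with hE
    set g : Fin M → ((m : {m : Fin N // m ≠ n}) → Fin ((fun _ => M) m.1)) :=
      fun t => fun _ => t with hg
    have hsub : E.submatrix id g = (1 : Matrix (Fin M) (Fin M) ℝ) := by
      funext p t
      show idTensor M N _ = _
      rw [Matrix.one_apply]
      unfold idTensor
      have hcond : (∀ m m' : Fin N,
          (if h : m = n then Fin.cast (congrArg (fun _ => M) h.symm) p else g t ⟨m, h⟩) =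
          (if h : m' = n then Fin.cast (congrArg (fun _ => M) h.symm) p else g t ⟨m', h⟩))
          ↔ p = t := by
        constructor
        · intro hall
          have := hall n m₁
          rw [dif_pos rfl, dif_neg hm₁] at this
          apply Fin.ext
          have hv := congrArg Fin.val this
          simpa [hg] using hv
        · intro hpt
          subst hpt
          intro m m'
          apply Fin.ext
          have hv : ∀ mm : Fin N,
              (((if h : mm = n then Fin.cast (congrArg (fun _ => M) h.symm) p
                else g p ⟨mm, h⟩) : Fin M) : ℕ) = (p : ℕ) := by
            intro mm
            by_cases hmm : mm = n
            · rw [dif_pos hmm]; try simp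
            · rw [dif_neg hmm]; try simp [hg]
          rw [hv m, hv m']
      simp only [id_eq]
      beta_reduce
      rw [if_congr hcond rfl rfl]
    have hle := myrank_submatrix_le E id g
    rw [hsub, Matrix.rank_one] at hle
    simpa using hle

theorem submax_id (M N : ℕ) (h2 : 2 ≤ N) :
    submaxRank N (fun _ => M) (idTensor M N) = M := by
  have hr : ∀ n : Fin N, (modeUnfold (idTensor M N) n).rank = M :=
    fun n => unfold_id_rank M N h2 n
  rw [submaxRank_eq_smv _ (by omega)]
  have hne : (⟨0, by omega⟩ : Fin N) ≠ ⟨1, by omega⟩ := by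
    intro hc
    have := congrArg Fin.val hc
    simp at this
  apply le_antisymm
  · apply smv_le
    intro n m _
    exact Or.inl (le_of_eq (hr n))
  · exact le_smv _ hne (le_of_eq (hr _).symm) (le_of_eq (hr _).symm)

end IdEq
/- ---------------- matrix axiom ---------------- -/

section MatrixEq
open Matrix

variable {N : ℕ}

theorem assoc_entry (h2 : 2 ≤ N) {I : Fin N → ℕ} (h1 : ∀ n : Fin N, 2 ≤ n.val → I n = 1)
    (X : Tensor N I) (i : (n : Fin N) → Fin (I n)) :
    assocMatrix h2 h1 X (i ⟨0, by omega⟩) (i ⟨1, by omega⟩) = X i := by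
  show X _ = X i
  congr 1
  funext m
  apply Fin.ext
  by_cases hm0 : m = (⟨0, by omega⟩ : Fin N)
  · rw [dif_pos hm0]
    subst hm0
    simp
  by_cases hm1 : m = (⟨1, by omega⟩ : Fin N)
  · rw [dif_neg hm0, dif_pos hm1]
    subst hm1
    simp
  · rw [dif_neg hm0, dif_neg hm1]
    simp only [Fin.coe_cast, Fin.val_zero]
    have hv0 : m.val ≠ 0 := fun hh => hm0 (Fin.ext hh)
    have hv1 : m.val ≠ 1 := fun hh => hm1 (Fin.ext hh)
    have hlt := (i m).isLt
    have hIm := h1 m (by omega)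
    omega

theorem assoc_eq_zero_iff (h2 : 2 ≤ N) {I : Fin N → ℕ}
    (h1 : ∀ n : Fin N, 2 ≤ n.val → I n = 1) (X : Tensor N I) :
    assocMatrix h2 h1 X = 0 ↔ X = 0 := by
  constructor
  · intro h
    funext i
    have := congrFun (congrFun h (i ⟨0, by omega⟩)) (i ⟨1, by omega⟩)
    rw [assoc_entry] at this
    simpa using this
  · rintro rfl
    funext p q
    rfl

theorem unfold0_rank (h2 : 2 ≤ N) {I : Fin N → ℕ}
    (h1 : ∀ n : Fin N, 2 ≤ n.val → I n = 1) (X : Tensor N I) :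
    (modeUnfold X (⟨0, by omega⟩ : Fin N)).rank = (assocMatrix h2 h1 X).rank := by
  have hne : (⟨1, by omega⟩ : Fin N) ≠ (⟨0, by omega⟩ : Fin N) := by
    intro hc; have := congrArg Fin.val hc; simp at this
  let e : ((m : {m : Fin N // m ≠ (⟨0, by omega⟩ : Fin N)}) → Fin (I m.1)) ≃
      Fin (I ⟨1, by omega⟩) :=
    { toFun := fun j => j ⟨⟨1, by omega⟩, hne⟩
      invFun := fun q => fun m =>
        if h : m.1 = (⟨1, by omega⟩ : Fin N) then Fin.cast (congrArg I h.symm) q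
        else Fin.cast (h1 m.1 (by
          have hv0 : m.1.val ≠ 0 := fun hh => m.2 (Fin.ext hh)
          have hv1 : m.1.val ≠ 1 := fun hh => h (Fin.ext hh)
          omega)).symm 0
      left_inv := fun j => by
        funext m
        beta_reduce
        by_cases h : m.1 = (⟨1, by omega⟩ : Fin N)
        · rw [dif_pos h]
          apply Fin.ext
          simp only [Fin.coe_cast]
          exact fin_val_congr j (Subtype.ext h.symm)
        · rw [dif_neg h]
          apply Fin.ext
          simp only [Fin.coe_cast, Fin.val_zero]
          have hlt := (j m).isLt
          have hIm := h1 m.1 (by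
            have hv0 : m.1.val ≠ 0 := fun hh => m.2 (Fin.ext hh)
            have hv1 : m.1.val ≠ 1 := fun hh => h (Fin.ext hh)
            omega)
          omega
      right_inv := fun q => by
        show (if h : _ then _ else _) = q
        rw [dif_pos rfl]
        apply Fin.ext
        simp }
  have heq : modeUnfold X (⟨0, by omega⟩ : Fin N) =
      (assocMatrix h2 h1 X).submatrix (Equiv.refl _) e := by
    funext p j
    show X _ = X _
    congr 1
    funext m
    apply Fin.ext
    by_cases hm0 : m = (⟨0, by omega⟩ : Fin N)
    · rw [dif_pos hm0, dif_pos hm0]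
      simp
    by_cases hm1 : m = (⟨1, by omega⟩ : Fin N)
    · rw [dif_neg hm0, dif_neg hm0, dif_pos hm1]
      simp only [Fin.coe_cast]
      exact fin_val_congr j (Subtype.ext hm1)
    · rw [dif_neg hm0, dif_neg hm0, dif_neg hm1]
      simp only [Fin.coe_cast, Fin.val_zero]
      have hv0 : m.val ≠ 0 := fun hh => hm0 (Fin.ext hh)
      have hv1 : m.val ≠ 1 := fun hh => hm1 (Fin.ext hh)
      have hlt : ((j ⟨m, hm0⟩ : Fin _) : ℕ) < I m := (j ⟨m, hm0⟩).isLt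
      have hIm := h1 m (by omega)
      omega
  rw [heq, myrank_submatrix_eq]

theorem unfold1_rank (h2 : 2 ≤ N) {I : Fin N → ℕ}
    (h1 : ∀ n : Fin N, 2 ≤ n.val → I n = 1) (X : Tensor N I) :
    (modeUnfold X (⟨1, by omega⟩ : Fin N)).rank = (assocMatrix h2 h1 X).rank := by
  have hne : (⟨0, by omega⟩ : Fin N) ≠ (⟨1, by omega⟩ : Fin N) := by
    intro hc; have := congrArg Fin.val hc; simp at this
  let e : ((m : {m : Fin N // m ≠ (⟨1, by omega⟩ : Fin N)}) → Fin (I m.1)) ≃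
      Fin (I ⟨0, by omega⟩) :=
    { toFun := fun j => j ⟨⟨0, by omega⟩, hne⟩
      invFun := fun q => fun m =>
        if h : m.1 = (⟨0, by omega⟩ : Fin N) then Fin.cast (congrArg I h.symm) q
        else Fin.cast (h1 m.1 (by
          have hv1 : m.1.val ≠ 1 := fun hh => m.2 (Fin.ext hh)
          have hv0 : m.1.val ≠ 0 := fun hh => h (Fin.ext hh)
          omega)).symm 0
      left_inv := fun j => by
        funext m
        beta_reduce
        by_cases h : m.1 = (⟨0, by omega⟩ : Fin N)
        · rw [dif_pos h]
          apply Fin.ext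
          simp only [Fin.coe_cast]
          exact fin_val_congr j (Subtype.ext h.symm)
        · rw [dif_neg h]
          apply Fin.ext
          simp only [Fin.coe_cast, Fin.val_zero]
          have hlt := (j m).isLt
          have hIm := h1 m.1 (by
            have hv1 : m.1.val ≠ 1 := fun hh => m.2 (Fin.ext hh)
            have hv0 : m.1.val ≠ 0 := fun hh => h (Fin.ext hh)
            omega)
          omega
      right_inv := fun q => by
        show (if h : _ then _ else _) = q
        rw [dif_pos rfl]
        apply Fin.ext
        simp }
  have heq : modeUnfold X (⟨1, by omega⟩ : Fin N) =
      ((assocMatrix h2 h1 X)ᵀ).submatrix (Equiv.refl _) e := by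
    funext p j
    show X _ = X _
    congr 1
    funext m
    apply Fin.ext
    by_cases hm1 : m = (⟨1, by omega⟩ : Fin N)
    · have hm0 : m ≠ (⟨0, by omega⟩ : Fin N) := by
        rw [hm1]; exact hne.symm
      rw [dif_pos hm1, dif_neg hm0, dif_pos hm1]
      simp
    by_cases hm0 : m = (⟨0, by omega⟩ : Fin N)
    · rw [dif_neg hm1, dif_pos hm0]
      simp only [Fin.coe_cast]
      exact fin_val_congr j (Subtype.ext hm0)
    · rw [dif_neg hm1, dif_neg hm0, dif_neg hm1]
      simp only [Fin.coe_cast, Fin.val_zero]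
      have hv0 : m.val ≠ 0 := fun hh => hm0 (Fin.ext hh)
      have hv1 : m.val ≠ 1 := fun hh => hm1 (Fin.ext hh)
      have hlt : ((j ⟨m, hm1⟩ : Fin _) : ℕ) < I m := (j ⟨m, hm1⟩).isLt
      have hIm := h1 m (by omega)
      omega
  rw [heq, myrank_submatrix_eq, Matrix.rank_transpose]

theorem unfold_high_rank {I : Fin N → ℕ}
    (h1 : ∀ n : Fin N, 2 ≤ n.val → I n = 1) (X : Tensor N I) (n : Fin N)
    (hn : 2 ≤ n.val) : (modeUnfold X n).rank ≤ 1 := by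
  refine le_trans (Matrix.rank_le_card_height _) ?_
  simp [h1 n hn]

theorem submax_matrix (h2 : 2 ≤ N) (I : Fin N → ℕ)
    (h1 : ∀ n : Fin N, 2 ≤ n.val → I n = 1) (X : Tensor N I) :
    submaxRank N I X = (assocMatrix h2 h1 X).rank := by
  have hne : (⟨0, by omega⟩ : Fin N) ≠ (⟨1, by omega⟩ : Fin N) := by
    intro hc; have := congrArg Fin.val hc; simp at this
  rw [submaxRank_eq_smv X (by omega)]
  by_cases hX : X = 0
  · subst hX
    have hA : assocMatrix h2 h1 (0 : Tensor N I) = 0 := (assoc_eq_zero_iff h2 h1 0).mpr rfl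
    rw [hA, Matrix.rank_zero]
    apply Nat.eq_zero_of_le_zero
    apply smv_le
    intro n m _
    refine Or.inl ?_
    rw [(myrank_eq_zero_iff _).mpr ((unfold_eq_zero_iff _ n).mpr rfl)]
  · have hA1 : 1 ≤ (assocMatrix h2 h1 X).rank := by
      rw [Nat.one_le_iff_ne_zero]
      intro h0
      exact hX ((assoc_eq_zero_iff h2 h1 X).mp ((myrank_eq_zero_iff _).mp h0))
    apply le_antisymm
    · apply smv_le
      intro a b hab
      by_cases ha2 : 2 ≤ a.val
      · exact Or.inl (le_trans (unfold_high_rank h1 X a ha2) hA1)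
      by_cases hb2 : 2 ≤ b.val
      · exact Or.inr (le_trans (unfold_high_rank h1 X b hb2) hA1)
      · refine Or.inl (le_of_eq ?_)
        rcases (by omega : a.val = 0 ∨ a.val = 1) with h | h
        · have : a = (⟨0, by omega⟩ : Fin N) := Fin.ext h
          rw [this]; exact unfold0_rank h2 h1 X
        · have : a = (⟨1, by omega⟩ : Fin N) := Fin.ext h
          rw [this]; exact unfold1_rank h2 h1 X
    · exact le_smv _ hne (le_of_eq (unfold0_rank h2 h1 X).symm)
        (le_of_eq (unfold1_rank h2 h1 X).symm)

end MatrixEq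

/-- The submax Tucker rank is a QZC rank function. -/
theorem isQZCRankFn_submax : IsQZCRankFn submaxRank :=
  { zero_iff := fun _N hN I X => submax_zero_iff hN I X
    one_iff := fun _N hN I X => submax_one_iff hN I X
    id_eq := fun M N h2 => submax_id M N h2
    matrix_eq := fun _N h2 I h1 X => submax_matrix h2 I h1 X
    smul_eq := fun _N hN I α hα X => submax_smul hN I α hα X
    perm_eq := fun _N hN I π X => submax_perm hN I π X
    subtensor_le := fun _N hN I J X Y h => submax_subtensor hN I J X Y h }
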